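/- (Infinite-time Gronwall lemma) Let B: [1,∞) → [0,∞) be continuously differentiable and suppose there are constants 0 < ε < 1, δ > 0, K > 0 such that |B'(t)| ≤ (ε/t)·B(t) + δ/t² and B(t) ≤ K/t for all t ≥ 1. Then B(t) ≤ δ/((1−ε)·t) for all t ≥ 1, with bound independent of K. -/

import Mathlib

open intervalIntegral Filter Topology

theorem stmt7 (B B' : ℝ → ℝ) (ε δ K : ℝ)
    (hε : 0 < ε) (hε1 : ε < 1) (hδ : 0 < δ) (hK : 0 < K)
    (hBnonneg : ∀ t ≥ (1 : ℝ), 0 ≤ B t)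
    (hderiv : ∀ t ≥ (1 : ℝ), HasDerivAt B (B' t) t)
    (hcont : ContinuousOn B' (Set.Ici 1))
    (hbound : ∀ t ≥ (1 : ℝ), |B' t| ≤ ε / t * B t + δ / t ^ 2)
    (hapriori : ∀ t ≥ (1 : ℝ), B t ≤ K / t) :
    ∀ t ≥ (1 : ℝ), B t ≤ δ / ((1 - ε) * t) := by
  have h1ε : 0 < 1 - ε := by linarith
  set M := δ / (1 - ε) with hM
  have hMpos : 0 < M := div_pos hδ h1ε
  have hMfix : ε * M + δ = M := by
    rw [hM]; field_simp; ring
  -- key bootstrap step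
  have step : ∀ C : ℝ, 0 ≤ C → (∀ t ≥ (1:ℝ), B t ≤ C / t) →
      ∀ t ≥ (1:ℝ), B t ≤ (ε * C + δ) / t := by
    intro C hC hB t ht
    have htpos : (0:ℝ) < t := by linarith
    have hεCδ : 0 ≤ ε * C + δ := by positivity
    have key : ∀ T ≥ t, B t ≤ (ε * C + δ) / t + K / T := by
      intro T hT
      have hTpos : 0 < T := lt_of_lt_of_le htpos hT
      have hsub : Set.uIcc t T ⊆ Set.Ici (1:ℝ) := by
        rw [Set.uIcc_of_le hT]
        intro x hx; exact le_trans ht hx.1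
      have hge1 : ∀ x ∈ Set.uIcc t T, (1:ℝ) ≤ x := fun x hx => hsub hx
      have hint : IntervalIntegrable B' MeasureTheory.volume t T :=
        (hcont.mono hsub).intervalIntegrable
      have hftc : ∫ τ in t..T, B' τ = B T - B t :=
        integral_eq_sub_of_hasDerivAt (fun x hx => hderiv x (hsub hx)) hint
      have hcont2 : ContinuousOn (fun τ : ℝ => (ε * C + δ) * (τ ^ 2)⁻¹) (Set.uIcc t T) := by
        apply ContinuousOn.mul continuousOn_const
        apply ContinuousOn.inv₀ (by fun_prop)
        intro x hx
        have := hge1 x hx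
        positivity
      have hint2 : IntervalIntegrable (fun τ : ℝ => (ε * C + δ) * (τ ^ 2)⁻¹)
          MeasureTheory.volume t T := hcont2.intervalIntegrable
      have hftc2 : ∫ τ in t..T, (ε * C + δ) * (τ ^ 2)⁻¹
          = (ε * C + δ) * (t⁻¹ - T⁻¹) := by
        rw [intervalIntegral.integral_const_mul]
        have h2 : ∫ τ in t..T, (τ ^ 2)⁻¹ = -T⁻¹ - -t⁻¹ := by
          apply integral_eq_sub_of_hasDerivAt
          · intro x hx
            have hx0 : x ≠ 0 := by
              have := hge1 x hx; positivity
            have h := (hasDerivAt_inv hx0).neg; rw [neg_neg] at h; exact h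
          · apply ContinuousOn.intervalIntegrable
            apply ContinuousOn.inv₀ (by fun_prop)
            intro x hx
            have := hge1 x hx; positivity
        rw [h2]; ring
      have hmono : ∫ τ in t..T, |B' τ| ≤ ∫ τ in t..T, (ε * C + δ) * (τ ^ 2)⁻¹ := by
        apply intervalIntegral.integral_mono_on hT hint.abs hint2
        intro x hx
        have hx1 : (1:ℝ) ≤ x := le_trans ht hx.1
        have hx0 : (0:ℝ) < x := by linarith
        have h1 : |B' x| ≤ ε / x * B x + δ / x ^ 2 := hbound x hx1
        have h2 : B x ≤ C / x := hB x hx1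
        have h3 : ε / x * B x ≤ ε / x * (C / x) := by
          apply mul_le_mul_of_nonneg_left h2 (by positivity)
        calc |B' x| ≤ ε / x * (C / x) + δ / x ^ 2 := by linarith
          _ = (ε * C + δ) * (x ^ 2)⁻¹ := by field_simp
      have habs : |∫ τ in t..T, B' τ| ≤ ∫ τ in t..T, |B' τ| :=
        intervalIntegral.abs_integral_le_integral_abs hT
      have hBt : B t = B T - ∫ τ in t..T, B' τ := by rw [hftc]; ring
      have hBT : B T ≤ K / T := hapriori T (le_trans ht hT)
      have hdrop : (ε * C + δ) * (t⁻¹ - T⁻¹) ≤ (ε * C + δ) / t := by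
        rw [div_eq_mul_inv]
        apply mul_le_mul_of_nonneg_left _ hεCδ
        have : 0 ≤ T⁻¹ := by positivity
        linarith
      have := habs
      rw [hftc2] at hmono
      calc B t = B T - ∫ τ in t..T, B' τ := hBt
        _ ≤ B T + |∫ τ in t..T, B' τ| := by
            have := abs_le.mp (le_refl |∫ τ in t..T, B' τ|) |>.1
            linarith [neg_abs_le (∫ τ in t..T, B' τ)]
        _ ≤ K / T + ((ε * C + δ) * (t⁻¹ - T⁻¹)) := by
            have := le_trans habs hmono
            linarith
        _ ≤ (ε * C + δ) / t + K / T := by linarith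
    -- let T → ∞
    have hlim : Tendsto (fun T : ℝ => (ε * C + δ) / t + K / T) atTop
        (𝓝 ((ε * C + δ) / t + 0)) := by
      apply Tendsto.add tendsto_const_nhds
      exact Tendsto.div_atTop (tendsto_const_nhds : Tendsto (fun _ : ℝ => K) atTop (𝓝 K)) tendsto_id
    rw [add_zero] at hlim
    apply ge_of_tendsto hlim
    filter_upwards [eventually_ge_atTop t] with T hT using key T hT
  -- bootstrap induction
  have ind : ∀ j : ℕ, ∀ t ≥ (1:ℝ), B t ≤ (K * ε ^ j + M) / t := by
    intro j
    induction j with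
    | zero =>
      intro t ht
      have htpos : (0:ℝ) < t := by linarith
      calc B t ≤ K / t := hapriori t ht
        _ ≤ (K * ε ^ 0 + M) / t := by
            gcongr
            simp only [pow_zero, mul_one]
            linarith
    | succ j ih =>
      intro t ht
      have hC : 0 ≤ K * ε ^ j + M := by positivity
      have := step (K * ε ^ j + M) hC ih t ht
      have heq : ε * (K * ε ^ j + M) + δ = K * ε ^ (j + 1) + M := by
        have : ε * (K * ε ^ j + M) + δ = K * ε ^ (j + 1) + (ε * M + δ) := by ring
        rw [this, hMfix]
      rwa [heq] at this
  -- let j → ∞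
  intro t ht
  have htpos : (0:ℝ) < t := by linarith
  have hlim : Tendsto (fun j : ℕ => (K * ε ^ j + M) / t) atTop
      (𝓝 ((K * 0 + M) / t)) := by
    apply Tendsto.div_const
    apply Tendsto.add_const
    exact (tendsto_pow_atTop_nhds_zero_of_lt_one hε.le hε1).const_mul K
  have : B t ≤ (K * 0 + M) / t :=
    ge_of_tendsto hlim (Eventually.of_forall fun j => ind j t ht)
  rw [mul_zero, zero_add] at this
  rwa [hM, div_div] at this
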